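/- For any ordinal α, the only automorphism of G(α,132) with α infinite is the identity; i.e., the automorphism group of G(α,132) is trivial for infinite α. -/

import Mathlib

/-- Vertices: pairs of ordinals `(x, y)` with `x < y < o`. -/
abbrev OV (o : Ordinal) := {p : Ordinal × Ordinal // p.1 < p.2 ∧ p.2 < o}

/-- The shift graph `G(o, 132)` on an ordinal `o`. -/
def OG132 (o : Ordinal) : SimpleGraph (OV o) where
  Adj a b := a.val.2 = b.val.1 ∨ b.val.2 = a.val.1
  symm := ⟨fun a b h => Or.symm h⟩
  loopless := ⟨fun a h => by rcases h with h | h <;> exact a.prop.1.ne' h⟩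

namespace Shift13
open Ordinal

lemma add11 (a : Ordinal) : a + 1 + 1 = a + 2 := by rw [add_assoc, one_add_one_eq_two]
lemma add_one_le_iff' {a b : Ordinal} : a + 1 ≤ b ↔ a < b := by
  rw [Ordinal.add_one_eq_succ, Order.succ_le_iff]
lemma lt_add_one_iff' {a b : Ordinal} : a < b + 1 ↔ a ≤ b := by
  rw [Ordinal.add_one_eq_succ, Order.lt_succ_iff]
lemma olt_succ (a : Ordinal) : a < a + 1 := lt_add_one_iff'.mpr le_rfl
lemma o12 : (1:Ordinal) < 2 := by rw [← one_add_one_eq_two]; exact olt_succ 1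
lemma o02 : (0:Ordinal) < 2 := lt_trans zero_lt_one o12
lemma o23 : (2:Ordinal) < 3 := by rw [← two_add_one_eq_three]; exact olt_succ 2
lemma o13 : (1:Ordinal) < 3 := lt_trans o12 o23
lemma olt_succ2 (a : Ordinal) : a < a + 2 := by
  rw [← add11]; exact lt_trans (olt_succ a) (olt_succ (a+1))
lemma osucc_lt_succ2 (a : Ordinal) : a + 1 < a + 2 := by rw [← add11]; exact olt_succ (a+1)
lemma two_sep {a b c : Ordinal} (h1 : a < b) (h2 : b < c) : a + 2 ≤ c := by
  rw [← add11]
  calc a + 1 + 1 ≤ b + 1 := add_le_add_left (add_one_le_iff'.mpr h1) 1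
  _ ≤ c := add_one_le_iff'.mpr h2
lemma add2_le_succ {a b : Ordinal} (h : a < b) : a + 2 ≤ b + 1 := by
  rw [← add11]; exact add_le_add_left (add_one_le_iff'.mpr h) 1
lemma lt_two_cases {a : Ordinal} (h : a < 2) : a = 0 ∨ a = 1 := by
  rw [← one_add_one_eq_two, lt_add_one_iff'] at h
  rcases lt_or_eq_of_le h with h | h
  · exact Or.inl (Ordinal.lt_one_iff_zero.mp h)
  · exact Or.inr h
lemma h2ω : (2:Ordinal) < omega0 := by simpa using Ordinal.nat_lt_omega0 2
lemma h3ω : (3:Ordinal) < omega0 := by simpa using Ordinal.nat_lt_omega0 3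

variable {α : Ordinal}

def vmk (x y : Ordinal) (h1 : x < y) (h2 : y < α) : OV α := ⟨(x,y), h1, h2⟩

lemma ovext {u v : OV α} (h1 : u.val.1 = v.val.1) (h2 : u.val.2 = v.val.2) : u = v :=
  Subtype.ext (Prod.ext h1 h2)
lemma biclique {u1 u2 w1 w2 : OV α} (hu : u1 ≠ u2) (hw : w1 ≠ w2)
    (h11 : (OG132 α).Adj u1 w1) (h12 : (OG132 α).Adj u1 w2)
    (h21 : (OG132 α).Adj u2 w1) (h22 : (OG132 α).Adj u2 w2) :
    (u1.val.2 = u2.val.2 ∧ w1.val.1 = u1.val.2 ∧ w2.val.1 = u1.val.2) ∨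
    (u1.val.1 = u2.val.1 ∧ w1.val.2 = u1.val.1 ∧ w2.val.2 = u1.val.1) := by
  revert hu hw h11 h12 h21 h22
  obtain ⟨⟨a,b⟩, hab, -⟩ := u1
  obtain ⟨⟨c,d⟩, hcd, -⟩ := u2
  obtain ⟨⟨p,q⟩, hpq, -⟩ := w1
  obtain ⟨⟨r,s⟩, hrs, -⟩ := w2
  intro hu hw h11 h12 h21 h22
  simp only at hab hcd hpq hrs ⊢
  have h1 : b = p ∨ q = a := h11
  have h2 : b = r ∨ s = a := h12
  have h3 : d = p ∨ q = c := h21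
  have h4 : d = r ∨ s = c := h22
  have hune : ¬ (a = c ∧ b = d) := by
    rintro ⟨rfl, rfl⟩; exact hu (ovext rfl rfl)
  have hwne : ¬ (p = r ∧ q = s) := by
    rintro ⟨rfl, rfl⟩; exact hw (ovext rfl rfl)
  rcases h1 with h1 | h1 <;> rcases h2 with h2 | h2 <;>
    rcases h3 with h3 | h3 <;> rcases h4 with h4 | h4
  · exact Or.inl ⟨h1.trans h3.symm, h1.symm, h2.symm⟩
  · exact Or.inl ⟨h1.trans h3.symm, h1.symm, h2.symm⟩
  · exact Or.inl ⟨h2.trans h4.symm, h1.symm, h2.symm⟩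
  · exact absurd ⟨h1.symm.trans h2, h3.trans h4.symm⟩ hwne
  · exact Or.inl ⟨h1.trans h3.symm, h1.symm, h4.symm.trans (h3.trans h1.symm)⟩
  · exact absurd ⟨h2.symm.trans h4, h1.trans h3.symm⟩ hune
  · -- b=p, s=a, q=c, d=r : cycle r<s=a<b=p<q=c<d=r
    exfalso
    have : r < r := by
      calc r < s := hrs
      _ = a := h2
      _ < b := hab
      _ = p := h1
      _ < q := hpq
      _ = c := h3
      _ < d := hcd
      _ = r := h4
    exact lt_irrefl _ this
  · -- b=p, s=a, q=c, s=c : a=c, q=a, then p<q=a<b=p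
    exfalso
    have hac : a = c := h2.symm.trans h4
    have : p < p := by
      calc p < q := hpq
      _ = c := h3
      _ = a := hac.symm
      _ < b := hab
      _ = p := h1
    exact lt_irrefl _ this
  · exact Or.inl ⟨h2.trans h4.symm, h3.symm.trans (h4.trans h2.symm), h2.symm⟩
  · -- q=a, b=r, d=p, s=c : cycle q=a<b=r<s=c<d=p<q
    exfalso
    have : q < q := by
      calc q = a := h1
      _ < b := hab
      _ = r := h2
      _ < s := hrs
      _ = c := h4
      _ < d := hcd
      _ = p := h3
      _ < q := hpq
    exact lt_irrefl _ this
  · exact absurd ⟨h1.symm.trans h3, h2.trans h4.symm⟩ hune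
  · exact Or.inr ⟨h1.symm.trans h3, h1, h4.trans (h3.symm.trans h1)⟩
  · exact absurd ⟨h3.symm.trans h4, h1.trans h2.symm⟩ hwne
  · exact Or.inr ⟨h2.symm.trans h4, h1, h2⟩
  · exact Or.inr ⟨h1.symm.trans h3, h1, h2⟩
  · exact Or.inr ⟨h1.symm.trans h3, h1, h2⟩


def LC (f : OG132 α ≃g OG132 α) (t : Ordinal) : Prop :=
  ∃ t', (∀ v : OV α, v.val.2 = t → (f v).val.2 = t') ∧
        (∀ v : OV α, v.val.1 = t → (f v).val.1 = t')

def RC (f : OG132 α ≃g OG132 α) (t : Ordinal) : Prop :=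
  ∃ t', (∀ v : OV α, v.val.2 = t → (f v).val.1 = t') ∧
        (∀ v : OV α, v.val.1 = t → (f v).val.2 = t')

lemma blob (f : OG132 α ≃g OG132 α) {t : Ordinal} (h2 : 2 ≤ t) (htn : t + 2 < α) :
    LC f t ∨ RC f t := by
  have finj : Function.Injective f := EquivLike.injective f
  have htα : t < α := (olt_succ2 t).trans htn
  have ht1α : t + 1 < α := (osucc_lt_succ2 t).trans htn
  have h0t : 0 < t := lt_of_lt_of_le o02 h2
  have h1t : 1 < t := lt_of_lt_of_le o12 h2
  set c1 : OV α := vmk 0 t h0t htα with hc1def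
  set c2 : OV α := vmk 1 t h1t htα with hc2def
  set r1 : OV α := vmk t (t+1) (olt_succ t) ht1α with hr1def
  set r2 : OV α := vmk t (t+2) (olt_succ2 t) htn with hr2def
  have hc12 : c1 ≠ c2 := by
    intro h; exact zero_ne_one (congrArg (fun z : OV α => z.val.1) h)
  have hr12 : r1 ≠ r2 := by
    intro h
    exact absurd (congrArg (fun z : OV α => z.val.2) h) (ne_of_lt (osucc_lt_succ2 t))
  have hfc12 : f c1 ≠ f c2 := fun h => hc12 (finj h)
  have hfr12 : f r1 ≠ f r2 := fun h => hr12 (finj h)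
  have madj := fun {u v : OV α} (h : (OG132 α).Adj u v) => f.map_adj_iff.mpr h
  have base := biclique hfc12 hfr12 (madj (Or.inl rfl)) (madj (Or.inl rfl))
    (madj (Or.inl rfl)) (madj (Or.inl rfl))
  rcases base with ⟨hcc, hr1, hr2⟩ | ⟨hcc, hr1, hr2⟩
  · -- L case : t' = (f c1).val.2
    left
    refine ⟨(f c1).val.2, ?_, ?_⟩
    · intro v hv
      by_cases hvc : v = c1
      · rw [hvc]
      · have hb := biclique (u1 := f v) (u2 := f c1) (w1 := f r1) (w2 := f r2)
          (fun h => hvc (finj h)) hfr12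
          (madj (Or.inl hv)) (madj (Or.inl hv)) (madj (Or.inl rfl)) (madj (Or.inl rfl))
        rcases hb with ⟨-, h, -⟩ | ⟨-, hA, hB⟩
        · exact h.symm.trans hr1
        · exact absurd (finj (ovext (hr1.trans hr2.symm) (hA.trans hB.symm))) hr12
    · intro v hv
      by_cases hvr : v = r1
      · rw [hvr]; exact hr1
      · have hb := biclique (u1 := f c1) (u2 := f c2) (w1 := f v) (w2 := f r1)
          hfc12 (fun h => hvr (finj h))
          (madj (Or.inl hv.symm)) (madj (Or.inl rfl))
          (madj (Or.inl hv.symm)) (madj (Or.inl rfl))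
        rcases hb with ⟨-, h, -⟩ | ⟨h1', -, -⟩
        · exact h
        · exact absurd (finj (ovext h1' hcc)) hc12
  · -- R case : t' = (f c1).val.1
    right
    refine ⟨(f c1).val.1, ?_, ?_⟩
    · intro v hv
      by_cases hvc : v = c1
      · rw [hvc]
      · have hb := biclique (u1 := f v) (u2 := f c1) (w1 := f r1) (w2 := f r2)
          (fun h => hvc (finj h)) hfr12
          (madj (Or.inl hv)) (madj (Or.inl hv)) (madj (Or.inl rfl)) (madj (Or.inl rfl))
        rcases hb with ⟨-, hA, hB⟩ | ⟨h, -, -⟩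
        · exact absurd (finj (ovext (hA.trans hB.symm) (hr1.trans hr2.symm))) hr12
        · exact h
    · intro v hv
      by_cases hvr : v = r1
      · rw [hvr]; exact hr1
      · have hb := biclique (u1 := f c1) (u2 := f c2) (w1 := f v) (w2 := f r1)
          hfc12 (fun h => hvr (finj h))
          (madj (Or.inl hv.symm)) (madj (Or.inl rfl))
          (madj (Or.inl hv.symm)) (madj (Or.inl rfl))
        rcases hb with ⟨h2', -, -⟩ | ⟨-, h, -⟩
        · exact absurd (finj (ovext hcc h2')) hc12
        · exact h


lemma LC_RC_absurd (f : OG132 α ≃g OG132 α) {t : Ordinal} (h2 : 2 ≤ t) (htn : t + 2 < α)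
    (hL : LC f t) (hR : RC f t) : False := by
  obtain ⟨l, hLc, hLr⟩ := hL
  obtain ⟨r, hRc, hRr⟩ := hR
  have htα : t < α := (olt_succ2 t).trans htn
  have ht1α : t + 1 < α := (osucc_lt_succ2 t).trans htn
  have h0t : 0 < t := lt_of_lt_of_le o02 h2
  set v0 : OV α := vmk 0 t h0t htα
  set v1 : OV α := vmk t (t+1) (olt_succ t) ht1α
  have e1 : (f v0).val.2 = l := hLc v0 rfl
  have e2 : (f v0).val.1 = r := hRc v0 rfl
  have e3 : (f v1).val.1 = l := hLr v1 rfl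
  have e4 : (f v1).val.2 = r := hRr v1 rfl
  have p1 : r < l := by rw [← e1, ← e2]; exact (f v0).prop.1
  have p2 : l < r := by rw [← e3, ← e4]; exact (f v1).prop.1
  exact lt_irrefl _ (lt_trans p1 p2)

lemma mixLR (f : OG132 α ≃g OG132 α) {s t : Ordinal} (hst : s < t) (htn : t + 2 < α)
    (hL : LC f s) (hR : RC f t) : False := by
  obtain ⟨l, hLc, hLr⟩ := hL
  obtain ⟨r, hRc, hRr⟩ := hR
  have htα : t < α := (olt_succ2 t).trans htn
  have ht1α : t + 1 < α := (osucc_lt_succ2 t).trans htn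
  set v0 : OV α := vmk s t hst htα
  set u1 : OV α := vmk s (t+1) (hst.trans (olt_succ t)) ht1α
  set u2 : OV α := vmk t (t+1) (olt_succ t) ht1α
  have e1 : (f v0).val.1 = l := hLr v0 rfl
  have e2 : (f v0).val.1 = r := hRc v0 rfl
  have e3 : (f u1).val.1 = l := hLr u1 rfl
  have e4 : (f u2).val.2 = r := hRr u2 rfl
  have hadj : (OG132 α).Adj (f u1) (f u2) :=
    Or.inr (by rw [e4, e3, e1.symm.trans e2])
  have := f.map_adj_iff.mp hadj
  rcases this with h | h
  · exact absurd (h : t + 1 = t) (ne_of_gt (olt_succ t))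
  · exact absurd (h : t + 1 = s) (ne_of_gt (hst.trans (olt_succ t)))

lemma mixRL (f : OG132 α ≃g OG132 α) {s t : Ordinal} (hst : s < t) (htn : t + 2 < α)
    (hR : RC f s) (hL : LC f t) : False := by
  obtain ⟨r, hRc, hRr⟩ := hR
  obtain ⟨l, hLc, hLr⟩ := hL
  have htα : t < α := (olt_succ2 t).trans htn
  have ht1α : t + 1 < α := (osucc_lt_succ2 t).trans htn
  set v0 : OV α := vmk s t hst htα
  set u1 : OV α := vmk s (t+1) (hst.trans (olt_succ t)) ht1α
  set u2 : OV α := vmk t (t+1) (olt_succ t) ht1α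
  have e1 : (f v0).val.2 = r := hRr v0 rfl
  have e2 : (f v0).val.2 = l := hLc v0 rfl
  have e3 : (f u1).val.2 = r := hRr u1 rfl
  have e4 : (f u2).val.1 = l := hLr u2 rfl
  have hadj : (OG132 α).Adj (f u1) (f u2) :=
    Or.inl (by rw [e3, e4, e1.symm.trans e2])
  have := f.map_adj_iff.mp hadj
  rcases this with h | h
  · exact absurd (h : t + 1 = t) (ne_of_gt (olt_succ t))
  · exact absurd (h : t + 1 = s) (ne_of_gt (hst.trans (olt_succ t)))

lemma allLC (f : OG132 α ≃g OG132 α) (hα : omega0 ≤ α) {t : Ordinal}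
    (h2 : 2 ≤ t) (htn : t + 2 < α) : LC f t := by
  rcases blob f h2 htn with h | h
  · exact h
  exfalso
  have hnice : ∀ n : ℕ, (2:Ordinal) ≤ (n:Ordinal) + 2 ∧ ((n:Ordinal) + 2) + 2 < α := by
    intro n
    refine ⟨le_add_self, ?_⟩
    exact lt_of_lt_of_le
      (Ordinal.principal_add_omega0
        (Ordinal.principal_add_omega0 (Ordinal.nat_lt_omega0 n) h2ω) h2ω) hα
  have hRC : ∀ n : ℕ, RC f ((n:Ordinal) + 2) := by
    intro n
    rcases blob f (hnice n).1 (hnice n).2 with hL | hR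
    · exfalso
      rcases lt_trichotomy ((n:Ordinal)+2) t with hlt | heq | hgt
      · exact mixLR f hlt htn hL h
      · rw [heq] at hL; exact LC_RC_absurd f h2 htn hL h
      · exact mixRL f hgt (hnice n).2 h hL
    · exact hR
  have hdec : ∀ n : ℕ, (hRC (n+1)).choose < (hRC n).choose := by
    intro n
    have hcast : ((n:Ordinal)) < ((n+1 : ℕ):Ordinal) := by exact_mod_cast Nat.lt_succ_self n
    have hlt : ((n:Ordinal) + 2) < ((n+1:ℕ):Ordinal) + 2 :=
      lt_of_le_of_lt (add2_le_succ hcast) (osucc_lt_succ2 _)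
    have hv : (((n+1:ℕ):Ordinal) + 2) < α := (olt_succ2 _).trans (hnice (n+1)).2
    set v0 : OV α := vmk ((n:Ordinal)+2) (((n+1:ℕ):Ordinal)+2) hlt hv
    have e1 : (f v0).val.2 = (hRC n).choose := (hRC n).choose_spec.2 v0 rfl
    have e2 : (f v0).val.1 = (hRC (n+1)).choose := (hRC (n+1)).choose_spec.1 v0 rfl
    rw [← e1, ← e2]
    exact (f v0).prop.1
  have hne : (Set.range fun n : ℕ => (hRC n).choose).Nonempty := ⟨_, 0, rfl⟩
  obtain ⟨n, hn⟩ := Ordinal.lt_wf.min_mem _ hne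
  have := Ordinal.lt_wf.not_lt_min (Set.range fun n : ℕ => (hRC n).choose) (x := (hRC (n+1)).choose) ⟨n+1, rfl⟩
  exact this (lt_of_lt_of_eq (hdec n) hn)

noncomputable def sig (f : OG132 α ≃g OG132 α) (t : Ordinal) : Ordinal :=
  if h : 2 ≤ t ∧ t + 2 < α then
    (f (vmk 0 t (lt_of_lt_of_le o02 h.1) ((olt_succ2 t).trans h.2))).val.2
  else 0

lemma sig_spec (f : OG132 α ≃g OG132 α) (hα : omega0 ≤ α) {t : Ordinal}
    (h2 : 2 ≤ t) (htn : t + 2 < α) :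
    (∀ v : OV α, v.val.2 = t → (f v).val.2 = sig f t) ∧
    (∀ v : OV α, v.val.1 = t → (f v).val.1 = sig f t) := by
  obtain ⟨t', hc, hr⟩ := allLC f hα h2 htn
  have he : sig f t = t' := by
    rw [sig, dif_pos (⟨h2, htn⟩ : 2 ≤ t ∧ t + 2 < α)]
    exact hc _ rfl
  rw [he]
  exact ⟨hc, hr⟩

lemma sig_nice (f : OG132 α ≃g OG132 α) (hα : omega0 ≤ α) {t : Ordinal}
    (h2 : 2 ≤ t) (htn : t + 2 < α) :
    2 ≤ sig f t ∧ sig f t + 2 < α := by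
  obtain ⟨hc, hr⟩ := sig_spec f hα h2 htn
  have finj : Function.Injective f := EquivLike.injective f
  have htα : t < α := (olt_succ2 t).trans htn
  have ht1α : t + 1 < α := (osucc_lt_succ2 t).trans htn
  have h0t : 0 < t := lt_of_lt_of_le o02 h2
  have h1t : 1 < t := lt_of_lt_of_le o12 h2
  constructor
  · set c1 : OV α := vmk 0 t h0t htα
    set c2 : OV α := vmk 1 t h1t htα
    have e1 : (f c1).val.2 = sig f t := hc c1 rfl
    have e2 : (f c2).val.2 = sig f t := hc c2 rfl
    have hne : (f c1).val.1 ≠ (f c2).val.1 := by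
      intro h
      exact zero_ne_one
        (congrArg (fun z : OV α => z.val.1) (finj (ovext h (e1.trans e2.symm))))
    have l1 : (f c1).val.1 < sig f t := e1 ▸ (f c1).prop.1
    have l2 : (f c2).val.1 < sig f t := e2 ▸ (f c2).prop.1
    rcases lt_or_gt_of_ne hne with h | h
    · exact le_trans le_add_self (two_sep h l2)
    · exact le_trans le_add_self (two_sep h l1)
  · set r1 : OV α := vmk t (t+1) (olt_succ t) ht1α
    set r2 : OV α := vmk t (t+2) (olt_succ2 t) htn
    have e1 : (f r1).val.1 = sig f t := hr r1 rfl
    have e2 : (f r2).val.1 = sig f t := hr r2 rfl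
    have g1 : sig f t < (f r1).val.2 := e1 ▸ (f r1).prop.1
    have g2 : sig f t < (f r2).val.2 := e2 ▸ (f r2).prop.1
    have hne : (f r1).val.2 ≠ (f r2).val.2 := by
      intro h
      have : r1 = r2 := finj (ovext (e1.trans e2.symm) h)
      exact absurd (congrArg (fun z : OV α => z.val.2) this) (ne_of_lt (osucc_lt_succ2 t))
    rcases lt_or_gt_of_ne hne with h | h
    · exact lt_of_le_of_lt (two_sep g1 h) (f r2).prop.2
    · exact lt_of_le_of_lt (two_sep g2 h) (f r1).prop.2

lemma sig_mono (f : OG132 α ≃g OG132 α) (hα : omega0 ≤ α) {s t : Ordinal}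
    (hs2 : 2 ≤ s) (hsn : s + 2 < α) (ht2 : 2 ≤ t) (htn : t + 2 < α) (hst : s < t) :
    sig f s < sig f t := by
  have htα : t < α := (olt_succ2 t).trans htn
  set v0 : OV α := vmk s t hst htα
  have e1 : (f v0).val.1 = sig f s := (sig_spec f hα hs2 hsn).2 v0 rfl
  have e2 : (f v0).val.2 = sig f t := (sig_spec f hα ht2 htn).1 v0 rfl
  rw [← e1, ← e2]
  exact (f v0).prop.1

lemma tau_sig (f : OG132 α ≃g OG132 α) (hα : omega0 ≤ α) {t : Ordinal}
    (h2 : 2 ≤ t) (htn : t + 2 < α) : sig f.symm (sig f t) = t := by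
  have hn := sig_nice f hα h2 htn
  have hspec := (sig_spec (f := f.symm) hα hn.1 hn.2).1
  have htα : t < α := (olt_succ2 t).trans htn
  set c1 : OV α := vmk 0 t (lt_of_lt_of_le o02 h2) htα
  have e1 : (f c1).val.2 = sig f t := (sig_spec f hα h2 htn).1 c1 rfl
  have h3 := hspec (f c1) e1
  have hsa : f.symm (f c1) = c1 := f.symm_apply_apply c1
  rw [hsa] at h3
  exact h3.symm

lemma sig_not_lt (f : OG132 α ≃g OG132 α) (hα : omega0 ≤ α) :
    ∀ t, (2 ≤ t ∧ t + 2 < α) → ¬ sig f t < t := by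
  intro t hn hlt
  have hne : ({u | (2 ≤ u ∧ u + 2 < α) ∧ sig f u < u} : Set Ordinal).Nonempty := ⟨t, hn, hlt⟩
  have hm := Ordinal.lt_wf.min_mem _ hne
  refine Ordinal.lt_wf.not_lt_min _
    (⟨sig_nice f hα hm.1.1 hm.1.2, ?_⟩ :
      sig f (Ordinal.lt_wf.min _ hne) ∈ {u | (2 ≤ u ∧ u + 2 < α) ∧ sig f u < u}) hm.2
  exact sig_mono f hα (sig_nice f hα hm.1.1 hm.1.2).1 (sig_nice f hα hm.1.1 hm.1.2).2
    hm.1.1 hm.1.2 hm.2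

lemma sig_id (f : OG132 α ≃g OG132 α) (hα : omega0 ≤ α) {t : Ordinal}
    (h2 : 2 ≤ t) (htn : t + 2 < α) : sig f t = t := by
  have h1 := sig_not_lt f hα t ⟨h2, htn⟩
  have hn := sig_nice f hα h2 htn
  have h2' := sig_not_lt f.symm hα (sig f t) hn
  have h3 := tau_sig f hα h2 htn
  rcases lt_trichotomy (sig f t) t with h | h | h
  · exact absurd h h1
  · exact h
  · rw [h3] at h2'
    exact absurd h h2'

lemma colfix (f : OG132 α ≃g OG132 α) (hα : omega0 ≤ α) {t : Ordinal}
    (h2 : 2 ≤ t) (htn : t + 2 < α) {v : OV α} (hv : v.val.2 = t) : (f v).val.2 = t := by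
  have h := (sig_spec f hα h2 htn).1 v hv
  rwa [sig_id f hα h2 htn] at h

lemma rowfix (f : OG132 α ≃g OG132 α) (hα : omega0 ≤ α) {t : Ordinal}
    (h2 : 2 ≤ t) (htn : t + 2 < α) {v : OV α} (hv : v.val.1 = t) : (f v).val.1 = t := by
  have h := (sig_spec f hα h2 htn).2 v hv
  rwa [sig_id f hα h2 htn] at h


lemma pin01 (f : OG132 α ≃g OG132 α) (hα : omega0 ≤ α) :
    ∀ w : OV α, w.val.1 = 0 → w.val.2 = 1 → f w = w := by
  intro w hw1 hw2
  have h2α : (2:Ordinal) < α := lt_of_lt_of_le h2ω hα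
  have h3α : (3:Ordinal) < α := lt_of_lt_of_le h3ω hα
  have h4 : (2:Ordinal) + 2 < α :=
    lt_of_lt_of_le (Ordinal.principal_add_omega0 h2ω h2ω) hα
  have h5 : (3:Ordinal) + 2 < α :=
    lt_of_lt_of_le (Ordinal.principal_add_omega0 h3ω h2ω) hα
  set v12 : OV α := vmk 1 2 o12 h2α with hv12
  set v13 : OV α := vmk 1 3 o13 h3α with hv13
  have e2 : (f v12).val.2 = 2 := colfix f hα le_rfl h4 rfl
  have e3 : (f v13).val.2 = 3 := colfix f hα (le_of_lt o23) h5 rfl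
  have m1 := f.map_adj_iff.mpr (Or.inl hw2 : (OG132 α).Adj w v12)
  have m2 := f.map_adj_iff.mpr (Or.inl hw2 : (OG132 α).Adj w v13)
  rcases m1 with h | h
  · rcases m2 with h' | h'
    · -- q = (f v12).1 and q = (f v13).1, q < 2
      have hq2 : (f w).val.2 < 2 := by rw [h, ← e2]; exact (f v12).prop.1
      have hq1 : 1 ≤ (f w).val.2 :=
        Order.one_le_iff_pos.mpr (lt_of_le_of_lt zero_le (f w).prop.1)
      have hq : (f w).val.2 = 1 := le_antisymm (lt_add_one_iff'.mp (by rwa [one_add_one_eq_two])) hq1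
      have hp : (f w).val.1 = 0 := Ordinal.lt_one_iff_zero.mp (hq ▸ (f w).prop.1)
      exact ovext (hp.trans hw1.symm) (hq.trans hw2.symm)
    · -- q = (f v12).1 < 2, p = (f v13).2 = 3
      exfalso
      have hq2 : (f w).val.2 < 2 := by rw [h, ← e2]; exact (f v12).prop.1
      have hp3 : (f w).val.1 = 3 := by rw [← h', e3]
      have : (3:Ordinal) < 2 := by
        calc (3:Ordinal) = (f w).val.1 := hp3.symm
        _ < (f w).val.2 := (f w).prop.1
        _ < 2 := hq2
      exact absurd this (not_lt.mpr (le_of_lt o23))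
  · rcases m2 with h' | h'
    · -- p = (f v12).2 = 2, q = (f v13).1 < 3 so q ≤ 2 = p < q
      exfalso
      have hp2 : (f w).val.1 = 2 := by rw [← h, e2]
      have hq3 : (f w).val.2 < 3 := by rw [h', ← e3]; exact (f v13).prop.1
      have hq2 : (f w).val.2 ≤ 2 := lt_add_one_iff'.mp (by rwa [two_add_one_eq_three])
      exact absurd ((f w).prop.1) (not_lt.mpr (hq2.trans (le_of_eq hp2.symm)))
    · -- p = 2 and p = 3
      exfalso
      have : (2:Ordinal) = 3 := by rw [← e2, h, ← h', e3]
      exact absurd this (ne_of_lt o23)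

lemma lowrowfix (f : OG132 α ≃g OG132 α) (hα : omega0 ≤ α) {v : OV α}
    (h2y : 2 ≤ v.val.2) (hyn : v.val.2 + 2 < α) (hv1 : v.val.1 < 2) : f v = v := by
  have h1α : (1:Ordinal) < α := lt_of_lt_of_le Ordinal.one_lt_omega0 hα
  have hcol : (f v).val.2 = v.val.2 := colfix f hα h2y hyn rfl
  have hfx2 : (f v).val.1 < 2 := by
    by_contra hc
    push_neg at hc
    have hxy : (f v).val.1 < v.val.2 := by rw [← hcol]; exact (f v).prop.1
    have hxn : (f v).val.1 + 2 < α :=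
      lt_trans (lt_of_le_of_lt (add2_le_succ hxy) (osucc_lt_succ2 _)) hyn
    have := rowfix f.symm hα hc hxn (rfl : (f v).val.1 = _)
    rw [f.symm_apply_apply] at this
    exact absurd hv1 (not_lt.mpr (this ▸ hc))
  set v01 : OV α := vmk 0 1 zero_lt_one h1α with hv01
  have hy0 : (0:Ordinal) < v.val.2 := lt_of_lt_of_le o02 h2y
  rcases lt_two_cases hv1 with hx0 | hx1
  · -- x = 0 : not adjacent to (0,1)
    have hna : ¬ (OG132 α).Adj v v01 := by
      rintro (hh | hh)
      · exact absurd (hh : v.val.2 = 0) (ne_of_gt hy0)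
      · rw [hx0] at hh; exact one_ne_zero (hh : (1:Ordinal) = 0)
    have hna' : ¬ (OG132 α).Adj (f v) v01 := by
      intro h
      rw [← pin01 f hα v01 rfl rfl] at h
      exact hna (f.map_adj_iff.mp h)
    rcases lt_two_cases hfx2 with hh | hh
    · exact ovext (hh.trans hx0.symm) hcol
    · exact absurd (Or.inr hh.symm) hna'
  · -- x = 1 : adjacent to (0,1)
    have hadj := f.map_adj_iff.mpr (Or.inr hx1.symm : (OG132 α).Adj v v01)
    rw [pin01 f hα v01 rfl rfl] at hadj
    rcases hadj with hh | hh
    · -- (f v).2 = 0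
      exact absurd (hcol.symm.trans (hh : (f v).val.2 = 0)) (ne_of_gt hy0)
    · exact ovext ((hh : (1:Ordinal) = (f v).val.1).symm.trans hx1.symm) hcol

lemma topstep (f : OG132 α ≃g OG132 α) (hα : omega0 ≤ α) {v : OV α}
    (h2x : 2 ≤ v.val.1) (hxn : v.val.1 + 2 < α) (hyt : α ≤ v.val.2 + 2) :
    (f v).val.1 = v.val.1 ∧ α ≤ (f v).val.2 + 2 := by
  have e1 : (f v).val.1 = v.val.1 := rowfix f hα h2x hxn rfl
  refine ⟨e1, ?_⟩
  by_contra hc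
  push_neg at hc
  have h2c : 2 ≤ (f v).val.2 := le_of_lt (lt_of_le_of_lt h2x (e1 ▸ (f v).prop.1))
  have := colfix f.symm hα h2c hc (rfl : (f v).val.2 = _)
  rw [f.symm_apply_apply] at this
  rw [← this] at hc
  exact absurd hyt (not_le.mpr hc)

lemma pinγβ (f : OG132 α ≃g OG132 α) (hα : omega0 ≤ α) {γ : Ordinal} (hγα : γ + 2 = α) :
    ∀ w : OV α, w.val.1 = γ → w.val.2 = γ + 1 → f w = w := by
  intro w hw1 hw2
  have hωγ : omega0 ≤ γ := by
    by_contra hc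
    push_neg at hc
    exact absurd hα (not_le.mpr (hγα ▸ Ordinal.principal_add_omega0 hc h2ω))
  have h2γ : (2:Ordinal) < γ := lt_of_lt_of_le h2ω hωγ
  have h3γ : (3:Ordinal) < γ := lt_of_lt_of_le h3ω hωγ
  have hγα' : γ < α := hγα ▸ olt_succ2 γ
  have h4 : (2:Ordinal) + 2 < α :=
    lt_of_lt_of_le (Ordinal.principal_add_omega0 h2ω h2ω) hα
  have h5 : (3:Ordinal) + 2 < α :=
    lt_of_lt_of_le (Ordinal.principal_add_omega0 h3ω h2ω) hα
  set v2 : OV α := vmk 2 γ h2γ hγα' with hv2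
  set v3 : OV α := vmk 3 γ h3γ hγα' with hv3
  obtain ⟨e2a, e2b⟩ := topstep f hα (v := v2) le_rfl h4 (le_of_eq hγα.symm)
  obtain ⟨e3a, e3b⟩ := topstep f hα (v := v3) (le_of_lt o23) h5 (le_of_eq hγα.symm)
  have e2a' : (f v2).val.1 = 2 := e2a
  have e3a' : (f v3).val.1 = 3 := e3a
  have hb2 : γ ≤ (f v2).val.2 := by
    by_contra hlt
    push_neg at hlt
    have h1 : (f v2).val.2 + 2 ≤ γ + 1 := add2_le_succ hlt
    exact absurd (le_trans e2b h1) (not_le.mpr (hγα ▸ osucc_lt_succ2 γ))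
  have hb3 : γ ≤ (f v3).val.2 := by
    by_contra hlt
    push_neg at hlt
    have h1 : (f v3).val.2 + 2 ≤ γ + 1 := add2_le_succ hlt
    exact absurd (le_trans e3b h1) (not_le.mpr (hγα ▸ osucc_lt_succ2 γ))
  have hc2 : (f v2).val.2 ≤ γ + 1 :=
    lt_add_one_iff'.mp (by rw [add11, hγα]; exact (f v2).prop.2)
  have m2 := f.map_adj_iff.mpr (Or.inl hw1.symm : (OG132 α).Adj v2 w)
  have m3 := f.map_adj_iff.mpr (Or.inl hw1.symm : (OG132 α).Adj v3 w)
  -- m2 : (f v2).2 = (f w).1 ∨ (f w).2 = (f v2).1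
  rcases m2 with h | h
  · rcases m3 with h' | h'
    · -- (f w).1 ≥ γ, ≤ γ+1, not γ+1
      have hwγ : γ ≤ (f w).val.1 := h ▸ hb2
      have hw1' : (f w).val.1 ≤ γ + 1 := h ▸ hc2
      have hne : (f w).val.1 ≠ γ + 1 := by
        intro hh
        have g1 : γ + 1 < (f w).val.2 := hh ▸ (f w).prop.1
        have g2 : (f w).val.2 ≤ γ + 1 :=
          lt_add_one_iff'.mp (by rw [add11, hγα]; exact (f w).prop.2)
        exact absurd g1 (not_lt.mpr g2)
      have hfw1 : (f w).val.1 = γ :=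
        le_antisymm (lt_add_one_iff'.mp (lt_of_le_of_ne hw1' hne)) hwγ
      have hfw2 : (f w).val.2 = γ + 1 := by
        have g1 : γ + 1 ≤ (f w).val.2 := add_one_le_iff'.mpr (hfw1 ▸ (f w).prop.1)
        have g2 : (f w).val.2 ≤ γ + 1 :=
          lt_add_one_iff'.mp (by rw [add11, hγα]; exact (f w).prop.2)
        exact le_antisymm g2 g1
      exact ovext (hfw1.trans hw1.symm) (hfw2.trans hw2.symm)
    · -- (f w).1 = (f v2).2 ≥ γ but (f w).2 = (f v3).1 = 3
      exfalso
      have hwγ : γ ≤ (f w).val.1 := h ▸ hb2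
      have hw3 : (f w).val.2 = 3 := h'.trans e3a'
      have : γ < 3 := lt_of_le_of_lt hwγ (hw3 ▸ (f w).prop.1)
      exact absurd this (not_lt.mpr (le_of_lt h3γ))
  · rcases m3 with h' | h'
    · exfalso
      have hwγ : γ ≤ (f w).val.1 := h' ▸ hb3
      have hw2' : (f w).val.2 = 2 := h.trans e2a'
      have : γ < 2 := lt_of_le_of_lt hwγ (hw2' ▸ (f w).prop.1)
      exact absurd this (not_lt.mpr (le_of_lt h2γ))
    · exfalso
      have g2 : (f w).val.2 = 2 := h.trans e2a'
      have g3 : (f w).val.2 = 3 := h'.trans e3a'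
      exact absurd (g2.symm.trans g3) (ne_of_lt o23)

lemma topfix (f : OG132 α ≃g OG132 α) (hα : omega0 ≤ α) {v : OV α}
    (h2x : 2 ≤ v.val.1) (hxn : v.val.1 + 2 < α) (hyt : α ≤ v.val.2 + 2) : f v = v := by
  obtain ⟨e1, e2⟩ := topstep f hα h2x hxn hyt
  rcases lt_trichotomy ((f v).val.2) (v.val.2) with h | h | h
  · -- c < y : then y = c+1, α = c+2
    exfalso
    have hy1 : v.val.2 ≤ (f v).val.2 + 1 :=
      lt_add_one_iff'.mp (by rw [add11]; exact lt_of_lt_of_le v.prop.2 e2)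
    have hyc : v.val.2 = (f v).val.2 + 1 := le_antisymm hy1 (add_one_le_iff'.mpr h)
    have hαc : (f v).val.2 + 2 = α :=
      le_antisymm (by
        rw [← add11]
        exact add_one_le_iff'.mpr (by rw [← hyc]; exact v.prop.2)) e2
    have hβα : (f v).val.2 + 1 < α := lt_of_lt_of_le (osucc_lt_succ2 _) (le_of_eq hαc)
    set gb : OV α := vmk ((f v).val.2) ((f v).val.2 + 1) (olt_succ _) hβα with hgb
    have hadj : (OG132 α).Adj (f v) (f gb) := by
      rw [pinγβ f hα hαc gb rfl rfl]
      exact Or.inl rfl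
    have hvadj := f.map_adj_iff.mp hadj
    rcases hvadj with hh | hh
    · exact absurd (hh : v.val.2 = (f v).val.2) (ne_of_gt h)
    · -- (f v).2 + 1 = v.1, but v.1 < v.2 = (f v).2+1
      exact absurd (hh : (f v).val.2 + 1 = v.val.1).symm
        (show v.val.1 ≠ (f v).val.2 + 1 by rw [← hyc]; exact ne_of_lt v.prop.1)
  · exact ovext e1 h
  · -- y < c : c = y+1, α = y+2
    exfalso
    have hc1 : (f v).val.2 ≤ v.val.2 + 1 :=
      lt_add_one_iff'.mp (by rw [add11]; exact lt_of_lt_of_le (f v).prop.2 hyt)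
    have hcy : (f v).val.2 = v.val.2 + 1 := le_antisymm hc1 (add_one_le_iff'.mpr h)
    have hαy : v.val.2 + 2 = α :=
      le_antisymm (by
        rw [← add11]
        exact add_one_le_iff'.mpr (by rw [← hcy]; exact (f v).prop.2)) hyt
    have hβα : v.val.2 + 1 < α := lt_of_lt_of_le (osucc_lt_succ2 _) (le_of_eq hαy)
    set gb : OV α := vmk (v.val.2) (v.val.2 + 1) (olt_succ _) hβα with hgb
    have hadj := f.map_adj_iff.mpr (Or.inl rfl : (OG132 α).Adj v gb)
    rw [pinγβ f hα hαy gb rfl rfl] at hadj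
    rcases hadj with hh | hh
    · exact absurd (hh : (f v).val.2 = v.val.2) (ne_of_gt h)
    · -- v.2 + 1 = (f v).1 = v.1
      rw [e1] at hh
      exact absurd (hh : v.val.2 + 1 = v.val.1).symm
        (ne_of_lt (lt_trans v.prop.1 (olt_succ _)))

lemma lowtopfix (f : OG132 α ≃g OG132 α) (hα : omega0 ≤ α) {v : OV α}
    (hv1 : v.val.1 < 2) (h2y : 2 ≤ v.val.2) (hyt : α ≤ v.val.2 + 2) : f v = v := by
  have h1α : (1:Ordinal) < α := lt_of_lt_of_le Ordinal.one_lt_omega0 hα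
  have hy0 : (0:Ordinal) < v.val.2 := lt_of_lt_of_le o02 h2y
  by_cases hy1 : v.val.2 + 1 < α
  · -- α = y + 2
    have hαy : v.val.2 + 2 = α :=
      le_antisymm (by rw [← add11]; exact add_one_le_iff'.mpr hy1) hyt
    set gb : OV α := vmk (v.val.2) (v.val.2 + 1) (olt_succ _) hy1 with hgb
    have hpin := pinγβ f hα hαy gb rfl rfl
    rcases lt_two_cases hv1 with hx0 | hx1
    · -- x = 0 : unique neighbor gb
      have hadj := f.map_adj_iff.mpr (Or.inl rfl : (OG132 α).Adj v gb)
      rw [hpin] at hadj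
      rcases hadj with hh | hh
      · -- (f v).2 = y ; now show (f v).1 = 0
        have h1 : (f v).val.1 = 0 := by
          by_contra hne
          have hpos : 0 < (f v).val.1 := pos_iff_ne_zero.mpr hne
          set u : OV α := vmk 0 ((f v).val.1) hpos
            (lt_trans (f v).prop.1 (f v).prop.2) with hu
          have hadj2 : (OG132 α).Adj u (f v) := Or.inl rfl
          have hpull := f.symm.map_adj_iff.mpr hadj2
          rw [f.symm_apply_apply] at hpull
          rcases hpull with g | g
          · rw [hx0] at g
            exact absurd (g ▸ (f.symm u).prop.1) not_lt_zero
          · -- v.2 = (f.symm u).1 ⇒ f.symm u = gb ⇒ u = gb ⇒ 0 = y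
            have hz2 : (f.symm u).val.2 ≤ v.val.2 + 1 :=
              lt_add_one_iff'.mp (by rw [add11, hαy]; exact (f.symm u).prop.2)
            have hz1 : v.val.2 + 1 ≤ (f.symm u).val.2 :=
              add_one_le_iff'.mpr (g ▸ (f.symm u).prop.1)
            have hequ : f.symm u = gb := ovext g.symm (le_antisymm hz2 hz1)
            have hu2 : u = f gb := by rw [← hequ, f.apply_symm_apply]
            rw [hpin] at hu2
            have h0 := congrArg (fun z : OV α => z.val.1) hu2
            exact absurd (h0 : (0:Ordinal) = v.val.2).symm (ne_of_gt hy0)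
        exact ovext (h1.trans hx0.symm) hh
      · -- y+1 = (f v).1 impossible
        exfalso
        have hh' : v.val.2 + 1 = (f v).val.1 := hh
        have g1 : v.val.2 + 1 < (f v).val.2 := by
          rw [hh']; exact (f v).prop.1
        have g2 : (f v).val.2 ≤ v.val.2 + 1 :=
          lt_add_one_iff'.mp (by rw [add11, hαy]; exact (f v).prop.2)
        exact absurd g1 (not_lt.mpr g2)
    · -- x = 1 : neighbors (0,1) and gb
      set v01 : OV α := vmk 0 1 zero_lt_one h1α with hv01
      have hadj1 := f.map_adj_iff.mpr (Or.inr hx1.symm : (OG132 α).Adj v v01)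
      rw [pin01 f hα v01 rfl rfl] at hadj1
      have hfx1 : (f v).val.1 = 1 := by
        rcases hadj1 with hh | hh
        · exact absurd ((hh : (f v).val.2 = 0) ▸ (f v).prop.1) not_lt_zero
        · exact (hh : (1:Ordinal) = (f v).val.1).symm
      have hadj2 := f.map_adj_iff.mpr (Or.inl rfl : (OG132 α).Adj v gb)
      rw [hpin] at hadj2
      rcases hadj2 with hh | hh
      · exact ovext (hfx1.trans hx1.symm) hh
      · exfalso
        rw [hfx1] at hh
        have : v.val.2 < 1 := (hh : v.val.2 + 1 = 1) ▸ olt_succ v.val.2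
        exact absurd (Ordinal.lt_one_iff_zero.mp this) (ne_of_gt hy0)
  · -- α = y + 1
    push_neg at hy1
    have hαy : α = v.val.2 + 1 := le_antisymm hy1 (add_one_le_iff'.mpr v.prop.2)
    rcases lt_two_cases hv1 with hx0 | hx1
    · -- (0, y) is isolated
      have hnon : ∀ u : OV α, ¬ (OG132 α).Adj v u := by
        rintro u (hh | hh)
        · have h2' : u.val.2 ≤ v.val.2 := lt_add_one_iff'.mp (hαy ▸ u.prop.2)
          exact absurd (show v.val.2 < u.val.2 by rw [hh]; exact u.prop.1)
            (not_lt.mpr h2')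
        · rw [hx0] at hh
          exact absurd ((hh : u.val.2 = 0) ▸ u.prop.1) not_lt_zero
      have hnon' : ∀ u : OV α, ¬ (OG132 α).Adj (f v) u := by
        intro u hu
        have hp := f.symm.map_adj_iff.mpr hu
        rw [f.symm_apply_apply] at hp
        exact hnon _ hp
      have h1 : (f v).val.1 = 0 := by
        by_contra hne
        have hpos : 0 < (f v).val.1 := pos_iff_ne_zero.mpr hne
        exact hnon' (vmk 0 ((f v).val.1) hpos (lt_trans (f v).prop.1 (f v).prop.2))
          (Or.inr rfl)
      have h2 : (f v).val.2 = v.val.2 := by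
        by_contra hne
        have hq : (f v).val.2 < v.val.2 :=
          lt_of_le_of_ne (lt_add_one_iff'.mp (hαy ▸ (f v).prop.2)) hne
        have hq1 : (f v).val.2 + 1 < α :=
          lt_of_le_of_lt (add_one_le_iff'.mpr hq) v.prop.2
        exact hnon' (vmk ((f v).val.2) ((f v).val.2 + 1) (olt_succ _) hq1) (Or.inl rfl)
      exact ovext (h1.trans hx0.symm) h2
    · -- (1, y), unique neighbor (0,1)
      set v01 : OV α := vmk 0 1 zero_lt_one h1α with hv01
      have huniq : ∀ u : OV α, (OG132 α).Adj v u → u = v01 := by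
        rintro u (hh | hh)
        · have h2' : u.val.2 ≤ v.val.2 := lt_add_one_iff'.mp (hαy ▸ u.prop.2)
          exact absurd (show v.val.2 < u.val.2 by rw [hh]; exact u.prop.1)
            (not_lt.mpr h2')
        · rw [hx1] at hh
          exact ovext (Ordinal.lt_one_iff_zero.mp ((hh : u.val.2 = 1) ▸ u.prop.1)) hh
      have hadj1 := f.map_adj_iff.mpr (Or.inr hx1.symm : (OG132 α).Adj v v01)
      rw [pin01 f hα v01 rfl rfl] at hadj1
      have hfx1 : (f v).val.1 = 1 := by
        rcases hadj1 with hh | hh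
        · exact absurd ((hh : (f v).val.2 = 0) ▸ (f v).prop.1) not_lt_zero
        · exact (hh : (1:Ordinal) = (f v).val.1).symm
      have h2 : (f v).val.2 = v.val.2 := by
        by_contra hne
        have hq : (f v).val.2 < v.val.2 :=
          lt_of_le_of_ne (lt_add_one_iff'.mp (hαy ▸ (f v).prop.2)) hne
        have hq1 : (f v).val.2 + 1 < α :=
          lt_of_le_of_lt (add_one_le_iff'.mpr hq) v.prop.2
        set u : OV α := vmk ((f v).val.2) ((f v).val.2 + 1) (olt_succ _) hq1 with hu
        have hadj2 : (OG132 α).Adj (f v) u := Or.inl rfl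
        have hp := f.symm.map_adj_iff.mpr hadj2
        rw [f.symm_apply_apply] at hp
        have hequ := huniq _ hp
        have hu2 : u = f v01 := by rw [← hequ, f.apply_symm_apply]
        rw [pin01 f hα v01 rfl rfl] at hu2
        have h0 := congrArg (fun z : OV α => z.val.1) hu2
        exact absurd (h0 : (f v).val.2 = 0)
          (ne_of_gt (lt_trans zero_lt_one (hfx1 ▸ (f v).prop.1)))
      exact ovext (hfx1.trans hx1.symm) h2

theorem main (f : OG132 α ≃g OG132 α) (hα : omega0 ≤ α) (v : OV α) : f v = v := by
  have h1α : (1:Ordinal) < α := lt_of_lt_of_le Ordinal.one_lt_omega0 hα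
  by_cases h2y : 2 ≤ v.val.2
  · by_cases hyn : v.val.2 + 2 < α
    · by_cases h2x : 2 ≤ v.val.1
      · have hxn : v.val.1 + 2 < α :=
          lt_trans (lt_of_le_of_lt (add2_le_succ v.prop.1) (osucc_lt_succ2 _)) hyn
        exact ovext (rowfix f hα h2x hxn rfl) (colfix f hα h2y hyn rfl)
      · push_neg at h2x
        exact lowrowfix f hα h2y hyn h2x
    · push_neg at hyn
      by_cases h2x : 2 ≤ v.val.1
      · by_cases hxn : v.val.1 + 2 < α
        · exact topfix f hα h2x hxn hyn
        · push_neg at hxn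
          have hyx : v.val.2 = v.val.1 + 1 := le_antisymm
            (lt_add_one_iff'.mp (by rw [add11]; exact lt_of_lt_of_le v.prop.2 hxn))
            (add_one_le_iff'.mpr v.prop.1)
          have hαx : v.val.1 + 2 = α := le_antisymm
            (by
              rw [← add11]
              exact add_one_le_iff'.mpr (by rw [← hyx]; exact v.prop.2)) hxn
          exact pinγβ f hα hαx v rfl hyx
      · push_neg at h2x
        exact lowtopfix f hα h2x h2y hyn
  · push_neg at h2y
    have hy1 : v.val.2 = 1 := by
      rcases lt_two_cases h2y with h | h
      · exact absurd (h ▸ v.prop.1) not_lt_zero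
      · exact h
    have hx0 : v.val.1 = 0 := Ordinal.lt_one_iff_zero.mp (hy1 ▸ v.prop.1)
    exact pin01 f hα v hx0 hy1

end Shift13

open Ordinal in
/-- For infinite `α`, the only automorphism of `G(α,132)` is the identity. -/
theorem stmt_13 (α : Ordinal) (hα : omega0 ≤ α) (f : OG132 α ≃g OG132 α) (v : OV α) :
    f v = v := Shift13.main f hα v
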